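/- For 0 < q ≤ 1 and s ≥ 0, the Wiener amalgam space W(C, ℓ^q_{v_s})(ℝ^{2d}) is closed under convolution: if F, G ∈ W(C, ℓ^q_{v_s})(ℝ^{2d}) then F∗G ∈ W(C, ℓ^q_{v_s})(ℝ^{2d}) with ‖F∗G‖ ≤ C‖F‖‖G‖ for a constant C independent of F, G. -/

import Mathlib

open scoped BigOperators
open MeasureTheory
open scoped ENNReal NNReal Convolution

namespace WienerAmalgamAux

variable {D : ℕ}

noncomputable def S (F : (Fin D → ℝ) → ℂ) (k : Fin D → ℤ) : ℝ :=
  ⨆ z : Set.Icc (0 : Fin D → ℝ) 1, ‖F ((z : Fin D → ℝ) + fun i => (k i : ℝ))‖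

noncomputable def fl (x : Fin D → ℝ) : Fin D → ℤ := fun i => ⌊x i⌋

instance : Nonempty (Set.Icc (0 : Fin D → ℝ) 1) :=
  ⟨⟨0, Set.mem_Icc.2 ⟨le_rfl, Pi.le_def.2 fun _ => zero_le_one⟩⟩⟩

lemma S_nonneg (F : (Fin D → ℝ) → ℂ) (k : Fin D → ℤ) : 0 ≤ S F k :=
  Real.iSup_nonneg fun _ => norm_nonneg _

lemma bddAbove_range_S (F : (Fin D → ℝ) → ℂ) (hF : Continuous F) (c : Fin D → ℝ) :
    BddAbove (Set.range fun z : Set.Icc (0 : Fin D → ℝ) 1 => ‖F ((z : Fin D → ℝ) + c)‖) := by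
  have hcomp : IsCompact (Set.Icc (0 : Fin D → ℝ) 1) := isCompact_Icc
  have h := hcomp.bddAbove_image (f := fun x : Fin D → ℝ => ‖F (x + c)‖)
    ((hF.comp (continuous_id.add continuous_const)).norm.continuousOn)
  rwa [Set.image_eq_range] at h

lemma norm_le_S {F : (Fin D → ℝ) → ℂ} (hF : Continuous F) (x : Fin D → ℝ) :
    ‖F x‖ ≤ S F (fl x) := by
  have hmem : (fun i => Int.fract (x i)) ∈ Set.Icc (0 : Fin D → ℝ) 1 :=
    Set.mem_Icc.2 ⟨Pi.le_def.2 fun i => Int.fract_nonneg _,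
      Pi.le_def.2 fun i => (Int.fract_lt_one _).le⟩
  have hx : (fun i => Int.fract (x i)) + (fun i => ((fl x i : ℤ) : ℝ)) = x := by
    funext i
    simpa [fl] using Int.fract_add_floor (x i)
  calc ‖F x‖ = ‖F ((fun i => Int.fract (x i)) + fun i => ((fl x i : ℤ) : ℝ))‖ := by rw [hx]
    _ ≤ S F (fl x) :=
      le_ciSup (bddAbove_range_S F hF (fun i => ((fl x i : ℤ) : ℝ))) ⟨_, hmem⟩

def Q (n : Fin D → ℤ) : Set (Fin D → ℝ) :=
  Set.univ.pi fun i => Set.Ico (n i : ℝ) ((n i : ℝ) + 1)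

lemma measurableSet_Q (n : Fin D → ℤ) : MeasurableSet (Q n) :=
  MeasurableSet.univ_pi fun _ => measurableSet_Ico

lemma mem_Q_iff {x : Fin D → ℝ} {n : Fin D → ℤ} :
    x ∈ Q n ↔ ∀ i, (n i : ℝ) ≤ x i ∧ x i < (n i : ℝ) + 1 := by
  simp [Q, Set.mem_univ_pi]

lemma fl_eq_of_mem {x : Fin D → ℝ} {n : Fin D → ℤ} (hx : x ∈ Q n) : fl x = n := by
  funext i
  have h := mem_Q_iff.1 hx i
  exact Int.floor_eq_iff.2 ⟨h.1, by push_cast; exact h.2⟩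

lemma mem_Q_fl (x : Fin D → ℝ) : x ∈ Q (fl x) :=
  mem_Q_iff.2 fun i => ⟨Int.floor_le _, Int.lt_floor_add_one _⟩

lemma iUnion_Q : (⋃ n : Fin D → ℤ, Q n) = Set.univ :=
  Set.eq_univ_of_forall fun x => Set.mem_iUnion.2 ⟨fl x, mem_Q_fl x⟩

lemma pairwise_disjoint_Q : Pairwise (Function.onFun Disjoint (Q (D := D))) := by
  intro m n hmn
  refine Set.disjoint_left.2 fun x hxm hxn => hmn ?_
  rw [← fl_eq_of_mem hxm, fl_eq_of_mem hxn]

lemma volume_Q (n : Fin D → ℤ) : volume (Q n) = 1 := by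
  rw [Q, volume_pi_pi]
  simp [Real.volume_Ico]

lemma lintegral_eq_tsum (f : (Fin D → ℝ) → ℝ≥0∞) :
    ∫⁻ y, f y = ∑' n : Fin D → ℤ, ∫⁻ y in Q n, f y := by
  rw [← setLIntegral_univ, ← iUnion_Q, lintegral_iUnion measurableSet_Q pairwise_disjoint_Q]

lemma sum_rpow_le {α : Type*} (s : Finset α) (f : α → ℝ≥0∞) {p : ℝ} (hp0 : 0 < p)
    (hp1 : p ≤ 1) : (∑ i ∈ s, f i) ^ p ≤ ∑ i ∈ s, f i ^ p := by
  classical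
  induction s using Finset.induction_on with
  | empty => simp [ENNReal.zero_rpow_of_pos hp0]
  | insert _ _ h ih =>
    rw [Finset.sum_insert h, Finset.sum_insert h]
    exact (ENNReal.rpow_add_le_add_rpow _ _ hp0.le hp1).trans (add_le_add_right ih _)

lemma tsum_rpow_le {α : Type*} (f : α → ℝ≥0∞) {p : ℝ} (hp0 : 0 < p) (hp1 : p ≤ 1) :
    (∑' i, f i) ^ p ≤ ∑' i, f i ^ p := by
  have key : ∀ s : Finset α, (∑ i ∈ s, f i) ≤ (∑' i, f i ^ p) ^ (1 / p) := by
    intro s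
    have h1 : (∑ i ∈ s, f i) ^ p ≤ ∑' i, f i ^ p :=
      (sum_rpow_le s f hp0 hp1).trans (ENNReal.sum_le_tsum s)
    have h2 := ENNReal.rpow_le_rpow h1 (by positivity : (0:ℝ) ≤ 1 / p)
    rwa [← ENNReal.rpow_mul, mul_one_div_cancel hp0.ne', ENNReal.rpow_one] at h2
  have h2 : (∑' i, f i) ≤ (∑' i, f i ^ p) ^ (1 / p) := by
    rw [ENNReal.tsum_eq_iSup_sum]; exact iSup_le key
  calc (∑' i, f i) ^ p ≤ ((∑' i, f i ^ p) ^ (1 / p)) ^ p := ENNReal.rpow_le_rpow h2 hp0.le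
    _ = ∑' i, f i ^ p := by
      rw [← ENNReal.rpow_mul, one_div_mul_cancel hp0.ne', ENNReal.rpow_one]

lemma ofReal_ciSup_le {α : Type*} [Nonempty α] {f : α → ℝ} {C : ℝ≥0∞}
    (h : ∀ a, ENNReal.ofReal (f a) ≤ C) : ENNReal.ofReal (⨆ a, f a) ≤ C := by
  rcases eq_or_ne C ⊤ with rfl | hC
  · exact le_top
  · refine le_trans (ENNReal.ofReal_le_ofReal
      (Real.iSup_le (fun a => ?_) ENNReal.toReal_nonneg)) ENNReal.ofReal_toReal_le
    exact (ENNReal.ofReal_le_iff_le_toReal hC).1 (h a)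

noncomputable def box (D : ℕ) : Finset (Fin D → ℤ) := Finset.Icc (fun _ => -1) fun _ => 1

lemma box_nonempty : (box D).Nonempty :=
  ⟨0, Finset.mem_Icc.2 ⟨Pi.le_def.2 fun _ => by norm_num, Pi.le_def.2 fun _ => by norm_num⟩⟩



lemma weight_le {D : ℕ} {s : ℝ} (hs : 0 ≤ s) (v : (Fin D → ℤ) → ℝ)
    (hv : ∀ k, v k = (1 + ‖(fun i => (k i : ℝ) : Fin D → ℝ)‖) ^ s)
    {k n e : Fin D → ℤ} (he : e ∈ box D) : v k ≤ v (k - n + e) * v n * 2 ^ s := by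
  set a := k - n + e with ha
  have hiv : ∀ m : Fin D → ℤ, (0:ℝ) ≤ ‖(fun i => (m i : ℝ) : Fin D → ℝ)‖ :=
    fun m => norm_nonneg _
  have he1 : ‖(fun i => (e i : ℝ) : Fin D → ℝ)‖ ≤ 1 := by
    refine (pi_norm_le_iff_of_nonneg zero_le_one).2 fun i => ?_
    have h := Finset.mem_Icc.1 he
    have h1 : (-1 : ℤ) ≤ e i := h.1 i
    have h2 : e i ≤ 1 := h.2 i
    rw [Real.norm_eq_abs, abs_le]
    constructor <;> [exact_mod_cast h1; exact_mod_cast h2]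
  have hsplit : (fun i => (k i : ℝ) : Fin D → ℝ) =
      (fun i => (a i : ℝ)) + ((fun i => (n i : ℝ)) - fun i => (e i : ℝ)) := by
    funext i
    simp only [Pi.add_apply, Pi.sub_apply, ha, Pi.sub_apply]
    push_cast [Pi.add_apply, Pi.sub_apply]
    ring
  have hnorm : ‖(fun i => (k i : ℝ) : Fin D → ℝ)‖ ≤
      ‖(fun i => (a i : ℝ) : Fin D → ℝ)‖ + (‖(fun i => (n i : ℝ) : Fin D → ℝ)‖ + 1) := by
    rw [hsplit]
    refine (norm_add_le _ _).trans (add_le_add_right ?_ _)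
    exact (norm_sub_le _ _).trans (add_le_add_right he1 _)
  have hmul : 1 + ‖(fun i => (k i : ℝ) : Fin D → ℝ)‖ ≤
      (1 + ‖(fun i => (a i : ℝ) : Fin D → ℝ)‖) * (1 + ‖(fun i => (n i : ℝ) : Fin D → ℝ)‖) * 2 := by
    nlinarith [hiv a, hiv n, hiv k, hnorm]
  rw [hv k, hv a, hv n]
  calc (1 + ‖(fun i => (k i : ℝ) : Fin D → ℝ)‖) ^ s
      ≤ ((1 + ‖(fun i => (a i : ℝ) : Fin D → ℝ)‖) *
          (1 + ‖(fun i => (n i : ℝ) : Fin D → ℝ)‖) * 2) ^ s := by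
        apply Real.rpow_le_rpow (by positivity) hmul hs
    _ = (1 + ‖(fun i => (a i : ℝ) : Fin D → ℝ)‖) ^ s *
          (1 + ‖(fun i => (n i : ℝ) : Fin D → ℝ)‖) ^ s * 2 ^ s := by
        rw [Real.mul_rpow (by positivity) (by norm_num),
          Real.mul_rpow (by positivity) (by positivity)]

lemma conv_cell_bound {D : ℕ} {F G : (Fin D → ℝ) → ℂ} (hF : Continuous F) (hG : Continuous G)
    (k : Fin D → ℤ) (z : Set.Icc (0 : Fin D → ℝ) 1) :
    ENNReal.ofReal ‖∫ y, F (((z : Fin D → ℝ) + fun i => (k i : ℝ)) - y) * G y‖ ≤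
      ∑' n : Fin D → ℤ,
        (∑ e ∈ box D, ENNReal.ofReal (S F (k - n + e))) * ENNReal.ofReal (S G n) := by
  set x : Fin D → ℝ := (z : Fin D → ℝ) + fun i => (k i : ℝ) with hxdef
  have hz0 : ∀ i, 0 ≤ (z : Fin D → ℝ) i := fun i => (Set.mem_Icc.1 z.2).1 i
  have hz1 : ∀ i, (z : Fin D → ℝ) i ≤ 1 := fun i => (Set.mem_Icc.1 z.2).2 i
  rw [ofReal_norm]
  calc (↑‖∫ y, F (x - y) * G y‖₊ : ℝ≥0∞)
      ≤ ∫⁻ y, ↑‖F (x - y) * G y‖₊ := enorm_integral_le_lintegral_enorm _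
    _ = ∑' n : Fin D → ℤ, ∫⁻ y in Q n, ↑‖F (x - y) * G y‖₊ := lintegral_eq_tsum _
    _ ≤ ∑' n : Fin D → ℤ,
        (∑ e ∈ box D, ENNReal.ofReal (S F (k - n + e))) * ENNReal.ofReal (S G n) := by
      refine ENNReal.tsum_le_tsum fun n => ?_
      have hpt : ∀ y ∈ Q n, (↑‖F (x - y) * G y‖₊ : ℝ≥0∞) ≤
          (∑ e ∈ box D, ENNReal.ofReal (S F (k - n + e))) * ENNReal.ofReal (S G n) := by
        intro y hy
        have hyQ := mem_Q_iff.1 hy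
        have h1 : (↑‖G y‖₊ : ℝ≥0∞) ≤ ENNReal.ofReal (S G n) := by
          rw [← enorm_eq_nnnorm, ← ofReal_norm, ← fl_eq_of_mem hy]
          exact ENNReal.ofReal_le_ofReal (norm_le_S hG y)
        have h2 : (↑‖F (x - y)‖₊ : ℝ≥0∞) ≤ ∑ e ∈ box D, ENNReal.ofReal (S F (k - n + e)) := by
          have hxi : ∀ i, (x - y) i = (z : Fin D → ℝ) i + (k i : ℝ) - y i := fun i => rfl
          have hup : ∀ i, fl (x - y) i ≤ k i - n i + 1 := by
            intro i
            have hle : (x - y) i ≤ ((k i - n i + 1 : ℤ) : ℝ) := by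
              rw [hxi i]; push_cast
              have := (hyQ i).1
              have := hz1 i
              linarith
            have h := Int.floor_le_floor hle
            rwa [Int.floor_intCast] at h
          have hlo : ∀ i, k i - n i - 1 ≤ fl (x - y) i := by
            intro i
            refine Int.le_floor.2 ?_
            rw [hxi i]; push_cast
            have := (hyQ i).2
            have := hz0 i
            linarith
          have hmem : fl (x - y) - (k - n) ∈ box D := by
            refine Finset.mem_Icc.2 ⟨Pi.le_def.2 fun i => ?_, Pi.le_def.2 fun i => ?_⟩
            · have := hlo i
              simp only [Pi.sub_apply]
              omega
            · have := hup i
              simp only [Pi.sub_apply]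
              omega
          have hfl : fl (x - y) = k - n + (fl (x - y) - (k - n)) := by abel
          calc (↑‖F (x - y)‖₊ : ℝ≥0∞) ≤ ENNReal.ofReal (S F (fl (x - y))) := by
                rw [← enorm_eq_nnnorm, ← ofReal_norm]
                exact ENNReal.ofReal_le_ofReal (norm_le_S hF _)
            _ ≤ ∑ e ∈ box D, ENNReal.ofReal (S F (k - n + e)) := by
                conv_lhs => rw [hfl]
                exact Finset.single_le_sum
                  (f := fun e => ENNReal.ofReal (S F (k - n + e))) (fun _ _ => zero_le) hmem
        calc (↑‖F (x - y) * G y‖₊ : ℝ≥0∞) = ↑‖F (x - y)‖₊ * ↑‖G y‖₊ := by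
              rw [nnnorm_mul, ENNReal.coe_mul]
          _ ≤ _ := mul_le_mul' h2 h1
      calc ∫⁻ y in Q n, ↑‖F (x - y) * G y‖₊
          ≤ ∫⁻ _ in Q n, ((∑ e ∈ box D, ENNReal.ofReal (S F (k - n + e))) *
              ENNReal.ofReal (S G n)) := setLIntegral_mono' (measurableSet_Q n) hpt
        _ = _ := by rw [setLIntegral_const, volume_Q, mul_one]


theorem key (D : ℕ) (q s : ℝ) (hq0 : 0 < q) (hq1 : q ≤ 1) (hs : 0 ≤ s)
    (v : (Fin D → ℤ) → ℝ)
    (hv : ∀ k, v k = (1 + ‖(fun i => (k i : ℝ) : Fin D → ℝ)‖) ^ s) :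
    ∃ C > 0, ∀ F G : (Fin D → ℝ) → ℂ, Continuous F → Continuous G →
      Summable (fun k => S F k ^ q * v k ^ q) →
      Summable (fun k => S G k ^ q * v k ^ q) →
      Continuous (fun z : Fin D → ℝ => ∫ y, F (z - y) * G y) ∧
      Summable (fun k => S (fun z => ∫ y, F (z - y) * G y) k ^ q * v k ^ q) ∧
      (∑' k, S (fun z => ∫ y, F (z - y) * G y) k ^ q * v k ^ q) ^ (1/q) ≤
        C * (∑' k, S F k ^ q * v k ^ q) ^ (1/q) *
          (∑' k, S G k ^ q * v k ^ q) ^ (1/q) := by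
  classical
  have hv1 : ∀ k, 1 ≤ v k := fun k => by
    rw [hv k]
    have h1 : (1:ℝ) ≤ 1 + ‖(fun i => (k i : ℝ) : Fin D → ℝ)‖ :=
      le_add_of_nonneg_right (norm_nonneg _)
    calc (1:ℝ) = 1 ^ s := (Real.one_rpow s).symm
      _ ≤ (1 + ‖(fun i => (k i : ℝ) : Fin D → ℝ)‖) ^ s :=
        Real.rpow_le_rpow zero_le_one h1 hs
  have hvnn : ∀ k, 0 ≤ v k := fun k => zero_le_one.trans (hv1 k)
  have hcard : (0:ℝ) < ((box D).card : ℝ) := by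
    exact_mod_cast Finset.card_pos.2 box_nonempty
  have h2snn : (0:ℝ) ≤ (2:ℝ) ^ s := Real.rpow_nonneg (by norm_num) s
  have h2spos : (0:ℝ) < (2:ℝ) ^ s := Real.rpow_pos_of_pos (by norm_num) s
  refine ⟨((box D).card : ℝ) ^ (1/q) * 2 ^ s,
    mul_pos (Real.rpow_pos_of_pos hcard _) h2spos, ?_⟩
  intro F G hF hG hsF hsG
  have hvqnn : ∀ k, (0:ℝ) ≤ v k ^ q := fun k => Real.rpow_nonneg (hvnn k) q
  have hterm_nn : ∀ (H : (Fin D → ℝ) → ℂ) k, (0:ℝ) ≤ S H k ^ q * v k ^ q :=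
    fun H k => mul_nonneg (Real.rpow_nonneg (S_nonneg H k) q) (hvqnn k)
  have h1vq : ∀ k, (1:ℝ) ≤ v k ^ q := fun k => by
    calc (1:ℝ) = 1 ^ q := (Real.one_rpow q).symm
      _ ≤ v k ^ q := Real.rpow_le_rpow zero_le_one (hv1 k) hq0.le
  -- each cell sup is dominated by the (1/q)-power of the q-sum
  have hSle : ∀ (H : (Fin D → ℝ) → ℂ), Summable (fun k => S H k ^ q * v k ^ q) →
      ∀ k, S H k ≤ (∑' j, S H j ^ q * v j ^ q) ^ (1/q) := by
    intro H hsH k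
    have h2 : S H k ^ q * v k ^ q ≤ ∑' j, S H j ^ q * v j ^ q :=
      Summable.le_tsum hsH k fun j _ => hterm_nn H j
    have h3 : S H k ^ q ≤ S H k ^ q * v k ^ q :=
      le_mul_of_one_le_right (Real.rpow_nonneg (S_nonneg H k) q) (h1vq k)
    have h4 := Real.rpow_le_rpow (Real.rpow_nonneg (S_nonneg H k) q)
      (h3.trans h2) (one_div_nonneg.2 hq0.le)
    rwa [← Real.rpow_mul (S_nonneg H k), mul_one_div_cancel hq0.ne', Real.rpow_one] at h4
  -- summability of cell sups
  have hSsummable : ∀ (H : (Fin D → ℝ) → ℂ),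
      Summable (fun k => S H k ^ q * v k ^ q) → Summable (fun n => S H n) := by
    intro H hsH
    set M := ((∑' j, S H j ^ q * v j ^ q) ^ (1/q)) ^ (1 - q) with hM
    have hMnn : 0 ≤ M :=
      Real.rpow_nonneg (Real.rpow_nonneg (tsum_nonneg fun j => hterm_nn H j) _) _
    refine Summable.of_nonneg_of_le (fun n => S_nonneg H n) (fun n => ?_) (hsH.mul_right M)
    by_cases h0 : S H n = 0
    · rw [h0]
      exact mul_nonneg (mul_nonneg (Real.rpow_nonneg le_rfl q) (hvqnn n)) hMnn
    · have hpos : 0 < S H n := (S_nonneg H n).lt_of_ne (Ne.symm h0)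
      have hsplit : S H n = S H n ^ q * S H n ^ (1 - q) := by
        rw [← Real.rpow_add hpos]; norm_num
      have hle1 : S H n ^ q ≤ S H n ^ q * v n ^ q :=
        le_mul_of_one_le_right (Real.rpow_nonneg (S_nonneg H n) q) (h1vq n)
      have hle2 : S H n ^ (1 - q) ≤ M :=
        Real.rpow_le_rpow (S_nonneg H n) (hSle H hsH n) (by linarith)
      calc S H n = S H n ^ q * S H n ^ (1 - q) := hsplit
        _ ≤ (S H n ^ q * v n ^ q) * M :=
          mul_le_mul hle1 hle2 (Real.rpow_nonneg (S_nonneg H n) _) (hterm_nn H n)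
  -- integrability of G
  have hGint : Integrable G volume := by
    refine ⟨hG.aestronglyMeasurable, ?_⟩
    show (∫⁻ y, (‖G y‖₊ : ℝ≥0∞)) < ⊤
    calc ∫⁻ y, (‖G y‖₊ : ℝ≥0∞) = ∑' n : Fin D → ℤ, ∫⁻ y in Q n, (‖G y‖₊ : ℝ≥0∞) :=
        lintegral_eq_tsum _
      _ ≤ ∑' n : Fin D → ℤ, ENNReal.ofReal (S G n) := by
        refine ENNReal.tsum_le_tsum fun n => ?_
        calc ∫⁻ y in Q n, (‖G y‖₊ : ℝ≥0∞) ≤ ∫⁻ _ in Q n, ENNReal.ofReal (S G n) :=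
            setLIntegral_mono' (measurableSet_Q n) fun y hy => by
              rw [← enorm_eq_nnnorm, ← ofReal_norm, ← fl_eq_of_mem hy]
              exact ENNReal.ofReal_le_ofReal (norm_le_S hG y)
          _ = ENNReal.ofReal (S G n) := by rw [setLIntegral_const, volume_Q, mul_one]
      _ = ENNReal.ofReal (∑' n, S G n) :=
        (ENNReal.ofReal_tsum_of_nonneg (fun n => S_nonneg G n) (hSsummable G hsG)).symm
      _ < ⊤ := ENNReal.ofReal_lt_top
  -- continuity of the convolution
  have hBdd : BddAbove (Set.range fun x => ‖F x‖) := by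
    refine ⟨(∑' j, S F j ^ q * v j ^ q) ^ (1/q), ?_⟩
    rintro r ⟨x, rfl⟩
    exact (norm_le_S hF x).trans (hSle F hsF _)
  have hconv0 : Continuous (G ⋆[ContinuousLinearMap.mul ℝ ℂ, volume] F) :=
    hBdd.continuous_convolution_right_of_integrable _ hGint hF
  have hconveq : (fun z : Fin D → ℝ => ∫ y, F (z - y) * G y) =
      (G ⋆[ContinuousLinearMap.mul ℝ ℂ, volume] F) := by
    funext zz
    rw [convolution_def]
    simp only [ContinuousLinearMap.mul_apply']
    have h : (fun y => F (zz - y) * G y) = fun y => G y * F (zz - y) := by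
      funext y; ring
    rw [h]
  have hcont : Continuous (fun z : Fin D → ℝ => ∫ y, F (z - y) * G y) := by
    rw [hconveq]; exact hconv0
  -- ===== main estimate in ℝ≥0∞ =====
  have hofq : ∀ (r : ℝ), 0 ≤ r → ENNReal.ofReal (r ^ q) = ENNReal.ofReal r ^ q :=
    fun r hr => (ENNReal.ofReal_rpow_of_nonneg hr hq0.le).symm
  have hAid : ∑' k, ENNReal.ofReal (S F k) ^ q * ENNReal.ofReal (v k) ^ q
      = ENNReal.ofReal (∑' k, S F k ^ q * v k ^ q) := by
    rw [ENNReal.ofReal_tsum_of_nonneg (hterm_nn F) hsF]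
    refine tsum_congr fun k => ?_
    rw [ENNReal.ofReal_mul (Real.rpow_nonneg (S_nonneg F k) q), hofq _ (S_nonneg F k),
      hofq _ (hvnn k)]
  have hBid : ∑' k, ENNReal.ofReal (S G k) ^ q * ENNReal.ofReal (v k) ^ q
      = ENNReal.ofReal (∑' k, S G k ^ q * v k ^ q) := by
    rw [ENNReal.ofReal_tsum_of_nonneg (hterm_nn G) hsG]
    refine tsum_congr fun k => ?_
    rw [ENNReal.ofReal_mul (Real.rpow_nonneg (S_nonneg G k) q), hofq _ (S_nonneg G k),
      hofq _ (hvnn k)]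
  have hwle : ∀ (k n : Fin D → ℤ) (e : Fin D → ℤ), e ∈ box D →
      ENNReal.ofReal (v k) ≤ ENNReal.ofReal (v (k - n + e)) * ENNReal.ofReal (v n) *
        ENNReal.ofReal ((2:ℝ) ^ s) := by
    intro k n e he
    calc ENNReal.ofReal (v k) ≤ ENNReal.ofReal (v (k - n + e) * v n * 2 ^ s) :=
        ENNReal.ofReal_le_ofReal (weight_le hs v hv he)
      _ = _ := by
        rw [ENNReal.ofReal_mul (mul_nonneg (hvnn _) (hvnn _)), ENNReal.ofReal_mul (hvnn _)]
  have hT : ∀ k, ENNReal.ofReal (S (fun z : Fin D → ℝ => ∫ y, F (z - y) * G y) k) ≤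
      ∑' n : Fin D → ℤ, (∑ e ∈ box D, ENNReal.ofReal (S F (k - n + e))) *
        ENNReal.ofReal (S G n) := by
    intro k
    unfold S
    exact ofReal_ciSup_le fun z => conv_cell_bound hF hG k z
  have hTprod : ∀ k, (∑' n : Fin D → ℤ, (∑ e ∈ box D, ENNReal.ofReal (S F (k - n + e))) *
        ENNReal.ofReal (S G n))
      = ∑' p : (Fin D → ℤ) × {e // e ∈ box D},
          ENNReal.ofReal (S F (k - p.1 + ↑p.2)) * ENNReal.ofReal (S G p.1) := by
    intro k
    rw [ENNReal.tsum_prod']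
    refine tsum_congr fun n => ?_
    rw [← Finset.tsum_subtype (box D) fun e => ENNReal.ofReal (S F (k - n + e)),
      ← ENNReal.tsum_mul_right]
  have hmainE : (∑' k, ENNReal.ofReal (S (fun z : Fin D → ℝ => ∫ y, F (z - y) * G y) k) ^ q *
        ENNReal.ofReal (v k) ^ q)
      ≤ (((box D).card : ℝ≥0∞) * ENNReal.ofReal ((2:ℝ) ^ s) ^ q) *
        (ENNReal.ofReal (∑' k, S F k ^ q * v k ^ q) *
          ENNReal.ofReal (∑' k, S G k ^ q * v k ^ q)) := by
    calc ∑' k, ENNReal.ofReal (S (fun z : Fin D → ℝ => ∫ y, F (z - y) * G y) k) ^ q *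
          ENNReal.ofReal (v k) ^ q
        ≤ ∑' k, ∑' p : (Fin D → ℤ) × {e // e ∈ box D},
            (ENNReal.ofReal (S F (k - p.1 + ↑p.2)) * ENNReal.ofReal (S G p.1)) ^ q *
              ENNReal.ofReal (v k) ^ q := by
          refine ENNReal.tsum_le_tsum fun k => ?_
          calc ENNReal.ofReal (S (fun z : Fin D → ℝ => ∫ y, F (z - y) * G y) k) ^ q *
                ENNReal.ofReal (v k) ^ q
              ≤ (∑' p : (Fin D → ℤ) × {e // e ∈ box D},
                  ENNReal.ofReal (S F (k - p.1 + ↑p.2)) * ENNReal.ofReal (S G p.1)) ^ q *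
                    ENNReal.ofReal (v k) ^ q := by
                refine mul_le_mul' (ENNReal.rpow_le_rpow ?_ hq0.le) le_rfl
                rw [← hTprod k]; exact hT k
            _ ≤ (∑' p : (Fin D → ℤ) × {e // e ∈ box D},
                  (ENNReal.ofReal (S F (k - p.1 + ↑p.2)) * ENNReal.ofReal (S G p.1)) ^ q) *
                    ENNReal.ofReal (v k) ^ q :=
                mul_le_mul' (tsum_rpow_le _ hq0 hq1) le_rfl
            _ = _ := ENNReal.tsum_mul_right.symm
      _ = ∑' p : (Fin D → ℤ) × {e // e ∈ box D}, ∑' k,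
            (ENNReal.ofReal (S F (k - p.1 + ↑p.2)) * ENNReal.ofReal (S G p.1)) ^ q *
              ENNReal.ofReal (v k) ^ q :=
          ENNReal.tsum_comm
      _ ≤ ∑' p : (Fin D → ℤ) × {e // e ∈ box D}, ∑' k,
            (ENNReal.ofReal (S F (k - p.1 + ↑p.2)) ^ q * ENNReal.ofReal (v (k - p.1 + ↑p.2)) ^ q) *
              ((ENNReal.ofReal (S G p.1) ^ q * ENNReal.ofReal (v p.1) ^ q) *
                ENNReal.ofReal ((2:ℝ) ^ s) ^ q) := by
          refine ENNReal.tsum_le_tsum fun p => ENNReal.tsum_le_tsum fun k => ?_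
          have h1 : ENNReal.ofReal (v k) ^ q ≤
              ENNReal.ofReal (v (k - p.1 + ↑p.2)) ^ q * ENNReal.ofReal (v p.1) ^ q *
                ENNReal.ofReal ((2:ℝ) ^ s) ^ q := by
            calc ENNReal.ofReal (v k) ^ q
                ≤ (ENNReal.ofReal (v (k - p.1 + ↑p.2)) * ENNReal.ofReal (v p.1) *
                    ENNReal.ofReal ((2:ℝ) ^ s)) ^ q :=
                  ENNReal.rpow_le_rpow (hwle k p.1 ↑p.2 p.2.2) hq0.le
              _ = _ := by
                rw [ENNReal.mul_rpow_of_nonneg _ _ hq0.le, ENNReal.mul_rpow_of_nonneg _ _ hq0.le]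
          calc (ENNReal.ofReal (S F (k - p.1 + ↑p.2)) * ENNReal.ofReal (S G p.1)) ^ q *
                ENNReal.ofReal (v k) ^ q
              = (ENNReal.ofReal (S F (k - p.1 + ↑p.2)) ^ q * ENNReal.ofReal (S G p.1) ^ q) *
                  ENNReal.ofReal (v k) ^ q := by
                rw [ENNReal.mul_rpow_of_nonneg _ _ hq0.le]
            _ ≤ (ENNReal.ofReal (S F (k - p.1 + ↑p.2)) ^ q * ENNReal.ofReal (S G p.1) ^ q) *
                (ENNReal.ofReal (v (k - p.1 + ↑p.2)) ^ q * ENNReal.ofReal (v p.1) ^ q *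
                  ENNReal.ofReal ((2:ℝ) ^ s) ^ q) := mul_le_mul' le_rfl h1
            _ = _ := by ring
      _ = ∑' p : (Fin D → ℤ) × {e // e ∈ box D},
            ENNReal.ofReal (∑' k, S F k ^ q * v k ^ q) *
              ((ENNReal.ofReal (S G p.1) ^ q * ENNReal.ofReal (v p.1) ^ q) *
                ENNReal.ofReal ((2:ℝ) ^ s) ^ q) := by
          refine tsum_congr fun p => ?_
          rw [ENNReal.tsum_mul_right]
          congr 1
          have hre := (Equiv.addRight ((↑p.2 : Fin D → ℤ) - p.1)).tsum_eq
            (fun m => ENNReal.ofReal (S F m) ^ q * ENNReal.ofReal (v m) ^ q)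
          rw [← hAid, ← hre]
          refine tsum_congr fun k => ?_
          rw [show k - p.1 + (↑p.2 : Fin D → ℤ) = k + ((↑p.2 : Fin D → ℤ) - p.1) from by abel]
          simp [Equiv.coe_addRight]
      _ = ENNReal.ofReal (∑' k, S F k ^ q * v k ^ q) *
            ((∑' p : (Fin D → ℤ) × {e // e ∈ box D},
              ENNReal.ofReal (S G p.1) ^ q * ENNReal.ofReal (v p.1) ^ q) *
                ENNReal.ofReal ((2:ℝ) ^ s) ^ q) := by
          rw [ENNReal.tsum_mul_left, ENNReal.tsum_mul_right]
      _ = _ := by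
          have hcardsum : (∑' p : (Fin D → ℤ) × {e // e ∈ box D},
              ENNReal.ofReal (S G p.1) ^ q * ENNReal.ofReal (v p.1) ^ q)
              = ((box D).card : ℝ≥0∞) * ENNReal.ofReal (∑' k, S G k ^ q * v k ^ q) := by
            rw [ENNReal.tsum_prod']
            beta_reduce
            calc ∑' (n : Fin D → ℤ) (_ : {e // e ∈ box D}),
                  ENNReal.ofReal (S G n) ^ q * ENNReal.ofReal (v n) ^ q
                = ∑' n : Fin D → ℤ, ((box D).card : ℝ≥0∞) *
                    (ENNReal.ofReal (S G n) ^ q * ENNReal.ofReal (v n) ^ q) := by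
                  refine tsum_congr fun n => ?_
                  rw [tsum_fintype, Finset.sum_const, Finset.card_univ, Fintype.card_coe,
                    nsmul_eq_mul]
              _ = ((box D).card : ℝ≥0∞) *
                    ∑' n, ENNReal.ofReal (S G n) ^ q * ENNReal.ofReal (v n) ^ q :=
                  ENNReal.tsum_mul_left
              _ = _ := by rw [hBid]
          rw [hcardsum]
          ring
  have htermid : ∀ k, ENNReal.ofReal
        (S (fun z : Fin D → ℝ => ∫ y, F (z - y) * G y) k ^ q * v k ^ q)
      = ENNReal.ofReal (S (fun z : Fin D → ℝ => ∫ y, F (z - y) * G y) k) ^ q *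
        ENNReal.ofReal (v k) ^ q := fun k => by
    rw [ENNReal.ofReal_mul (Real.rpow_nonneg (S_nonneg _ k) q), hofq _ (S_nonneg _ k),
      hofq _ (hvnn k)]
  have hBoundNeTop : (((box D).card : ℝ≥0∞) * ENNReal.ofReal ((2:ℝ) ^ s) ^ q) *
      (ENNReal.ofReal (∑' k, S F k ^ q * v k ^ q) *
        ENNReal.ofReal (∑' k, S G k ^ q * v k ^ q)) ≠ ⊤ := by
    refine ENNReal.mul_ne_top (ENNReal.mul_ne_top (ENNReal.natCast_ne_top _) ?_)
      (ENNReal.mul_ne_top ENNReal.ofReal_ne_top ENNReal.ofReal_ne_top)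
    exact ENNReal.rpow_ne_top_of_nonneg hq0.le ENNReal.ofReal_ne_top
  have hfin : (∑' k, ENNReal.ofReal
      (S (fun z : Fin D → ℝ => ∫ y, F (z - y) * G y) k ^ q * v k ^ q)) ≠ ⊤ := by
    refine ne_top_of_le_ne_top hBoundNeTop ?_
    calc ∑' k, ENNReal.ofReal (S (fun z : Fin D → ℝ => ∫ y, F (z - y) * G y) k ^ q * v k ^ q)
        = ∑' k, ENNReal.ofReal (S (fun z : Fin D → ℝ => ∫ y, F (z - y) * G y) k) ^ q *
            ENNReal.ofReal (v k) ^ q := tsum_congr htermid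
      _ ≤ _ := hmainE
  have hsumm : Summable
      (fun k => S (fun z : Fin D → ℝ => ∫ y, F (z - y) * G y) k ^ q * v k ^ q) := by
    have h6 : Summable (fun k =>
        (S (fun z : Fin D → ℝ => ∫ y, F (z - y) * G y) k ^ q * v k ^ q).toNNReal) :=
      ENNReal.tsum_coe_ne_top_iff_summable.1 (by simpa [ENNReal.ofReal] using hfin)
    have h7 := NNReal.summable_coe.2 h6
    refine h7.congr fun k => ?_
    exact Real.coe_toNNReal _ (hterm_nn _ k)
  refine ⟨hcont, hsumm, ?_⟩
  have hAAnn : 0 ≤ ∑' k, S F k ^ q * v k ^ q := tsum_nonneg (hterm_nn F)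
  have hBBnn : 0 ≤ ∑' k, S G k ^ q * v k ^ q := tsum_nonneg (hterm_nn G)
  have hRBnn : (0:ℝ) ≤ ((box D).card : ℝ) * ((2:ℝ) ^ s) ^ q *
      ((∑' k, S F k ^ q * v k ^ q) * (∑' k, S G k ^ q * v k ^ q)) :=
    mul_nonneg (mul_nonneg hcard.le (Real.rpow_nonneg h2snn q)) (mul_nonneg hAAnn hBBnn)
  have hle : (∑' k, S (fun z : Fin D → ℝ => ∫ y, F (z - y) * G y) k ^ q * v k ^ q)
      ≤ ((box D).card : ℝ) * ((2:ℝ) ^ s) ^ q *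
        ((∑' k, S F k ^ q * v k ^ q) * (∑' k, S G k ^ q * v k ^ q)) := by
    rw [← ENNReal.ofReal_le_ofReal_iff hRBnn,
      ENNReal.ofReal_tsum_of_nonneg (hterm_nn _) hsumm]
    calc ∑' k, ENNReal.ofReal (S (fun z : Fin D → ℝ => ∫ y, F (z - y) * G y) k ^ q * v k ^ q)
        = ∑' k, ENNReal.ofReal (S (fun z : Fin D → ℝ => ∫ y, F (z - y) * G y) k) ^ q *
            ENNReal.ofReal (v k) ^ q := tsum_congr htermid
      _ ≤ _ := hmainE
      _ = ENNReal.ofReal (((box D).card : ℝ) * ((2:ℝ) ^ s) ^ q *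
            ((∑' k, S F k ^ q * v k ^ q) * (∑' k, S G k ^ q * v k ^ q))) := by
        rw [ENNReal.ofReal_mul (mul_nonneg hcard.le (Real.rpow_nonneg h2snn q)),
          ENNReal.ofReal_mul hcard.le, ENNReal.ofReal_mul hAAnn,
          ENNReal.ofReal_natCast, hofq _ h2snn]
  have hstep := Real.rpow_le_rpow (tsum_nonneg (hterm_nn _)) hle (one_div_nonneg.2 hq0.le)
  refine hstep.trans ?_
  have h2sq : (((2:ℝ) ^ s) ^ q) ^ (1/q) = (2:ℝ) ^ s := by
    rw [← Real.rpow_mul h2snn, mul_one_div_cancel hq0.ne', Real.rpow_one]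
  rw [Real.mul_rpow (mul_nonneg hcard.le (Real.rpow_nonneg h2snn q)) (mul_nonneg hAAnn hBBnn),
    Real.mul_rpow hcard.le (Real.rpow_nonneg h2snn q),
    Real.mul_rpow hAAnn hBBnn, h2sq]
  exact le_of_eq (by ring)

end WienerAmalgamAux

/-- Convolution relation for Wiener amalgam spaces: for `0 < q ≤ 1` and `s ≥ 0`,
`W(C, ℓ^q_{v_s})(ℝ^{2d}) ∗ W(C, ℓ^q_{v_s})(ℝ^{2d}) ⊆ W(C, ℓ^q_{v_s})(ℝ^{2d})`, with a
norm estimate `‖F∗G‖ ≤ C ‖F‖ ‖G‖` whose constant is independent of `F` and `G`. -/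
theorem wiener_amalgam_convolution (d : ℕ) (q s : ℝ) (hq0 : 0 < q) (hq1 : q ≤ 1)
    (hs : 0 ≤ s) (v : (Fin (2 * d) → ℤ) → ℝ)
    (hv : ∀ k, v k = (1 + ‖(fun i => (k i : ℝ) : Fin (2 * d) → ℝ)‖) ^ s) :
    ∃ C > 0, ∀ F G : (Fin (2 * d) → ℝ) → ℂ, Continuous F → Continuous G →
      Summable (fun k : Fin (2 * d) → ℤ =>
        (⨆ z : Set.Icc (0 : Fin (2 * d) → ℝ) 1,
          ‖F ((z : Fin (2 * d) → ℝ) + fun i => (k i : ℝ))‖) ^ q * v k ^ q) →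
      Summable (fun k : Fin (2 * d) → ℤ =>
        (⨆ z : Set.Icc (0 : Fin (2 * d) → ℝ) 1,
          ‖G ((z : Fin (2 * d) → ℝ) + fun i => (k i : ℝ))‖) ^ q * v k ^ q) →
      Continuous (fun z : Fin (2 * d) → ℝ => ∫ y, F (z - y) * G y) ∧
      Summable (fun k : Fin (2 * d) → ℤ =>
        (⨆ z : Set.Icc (0 : Fin (2 * d) → ℝ) 1,
          ‖∫ y, F (((z : Fin (2 * d) → ℝ) + fun i => (k i : ℝ)) - y) * G y‖) ^ q * v k ^ q) ∧
      (∑' k : Fin (2 * d) → ℤ,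
        (⨆ z : Set.Icc (0 : Fin (2 * d) → ℝ) 1,
          ‖∫ y, F (((z : Fin (2 * d) → ℝ) + fun i => (k i : ℝ)) - y) * G y‖) ^ q * v k ^ q) ^ (1 / q) ≤
        C * (∑' k : Fin (2 * d) → ℤ,
          (⨆ z : Set.Icc (0 : Fin (2 * d) → ℝ) 1,
            ‖F ((z : Fin (2 * d) → ℝ) + fun i => (k i : ℝ))‖) ^ q * v k ^ q) ^ (1 / q) *
          (∑' k : Fin (2 * d) → ℤ,
            (⨆ z : Set.Icc (0 : Fin (2 * d) → ℝ) 1,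
              ‖G ((z : Fin (2 * d) → ℝ) + fun i => (k i : ℝ))‖) ^ q * v k ^ q) ^ (1 / q) := by
  exact WienerAmalgamAux.key (2 * d) q s hq0 hq1 hs v hv
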